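/- The linear coaxial constitutive law Ax = λ(tr x)e + 2μx + tr(hx)e on symmetric 3×3 matrices (with h a traceless symmetric matrix) is monotone, i.e., tr((Ax)x) ≥ 0 for all symmetric x, if and only if μ ≥ 0, 3λ + 2μ ≥ 0, and tr(h²) ≤ (8/3)μ(3λ + 2μ). -/

import Mathlib

open Matrix

/-- Weighted Cauchy–Schwarz with weights (1,1,1,2,2,2). -/
lemma wcs18 (a b c d e f p q r u v w : ℝ) :
    (a*p + b*q + c*r + 2*(d*u + e*v + f*w))^2 ≤
      (a^2+b^2+c^2+2*(d^2+e^2+f^2)) * (p^2+q^2+r^2+2*(u^2+v^2+w^2)) := by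
  nlinarith [sq_nonneg (a*q-b*p), sq_nonneg (a*r-c*p), sq_nonneg (b*r-c*q),
    sq_nonneg (a*u-d*p), sq_nonneg (a*v-e*p), sq_nonneg (a*w-f*p),
    sq_nonneg (b*u-d*q), sq_nonneg (b*v-e*q), sq_nonneg (b*w-f*q),
    sq_nonneg (c*u-d*r), sq_nonneg (c*v-e*r), sq_nonneg (c*w-f*r),
    sq_nonneg (d*v-e*u), sq_nonneg (d*w-f*u), sq_nonneg (e*w-f*v)]

/-- The value of the quadratic form. -/
lemma val18 (l μ : ℝ) (h x : Matrix (Fin 3) (Fin 3) ℝ) :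
    (((l * x.trace) • (1 : Matrix (Fin 3) (Fin 3) ℝ) + (2 * μ) • x
        + (h * x).trace • (1 : Matrix (Fin 3) (Fin 3) ℝ)) * x).trace
      = l * x.trace^2 + 2*μ*(x*x).trace + (h*x).trace * x.trace := by
  simp [add_mul, Matrix.smul_mul, trace_add, trace_smul, smul_eq_mul]
  ring

/-- For a symmetric matrix, `tr(m²) ≥ 0` and `3 tr(m²) ≥ (tr m)²`. -/
lemma sq18 (x : Matrix (Fin 3) (Fin 3) ℝ) (hx : xᵀ = x) :
    0 ≤ (x*x).trace ∧ x.trace^2 ≤ 3*(x*x).trace := by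
  have x10 : x 1 0 = x 0 1 := by have := congrFun (congrFun hx 0) 1; simpa using this
  have x20 : x 2 0 = x 0 2 := by have := congrFun (congrFun hx 0) 2; simpa using this
  have x21 : x 2 1 = x 1 2 := by have := congrFun (congrFun hx 1) 2; simpa using this
  simp only [Matrix.trace, Matrix.diag, Matrix.mul_apply, Fin.sum_univ_three,
    x10, x20, x21]
  constructor
  · nlinarith [sq_nonneg (x 0 0), sq_nonneg (x 1 1), sq_nonneg (x 2 2),
      sq_nonneg (x 0 1), sq_nonneg (x 0 2), sq_nonneg (x 1 2)]
  · nlinarith [sq_nonneg (x 0 0 - x 1 1), sq_nonneg (x 0 0 - x 2 2),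
      sq_nonneg (x 1 1 - x 2 2), sq_nonneg (x 0 1), sq_nonneg (x 0 2),
      sq_nonneg (x 1 2)]

/-- Centered Cauchy–Schwarz: `3 tr(hx)² ≤ tr(h²)(3 tr(x²) - (tr x)²)`. -/
lemma cs18 (h x : Matrix (Fin 3) (Fin 3) ℝ)
    (hsym : hᵀ = h) (htr : h.trace = 0) (hx : xᵀ = x) :
    3*((h*x).trace)^2 ≤ (h*h).trace * (3*(x*x).trace - x.trace^2) := by
  have h10 : h 1 0 = h 0 1 := by have := congrFun (congrFun hsym 0) 1; simpa using this
  have h20 : h 2 0 = h 0 2 := by have := congrFun (congrFun hsym 0) 2; simpa using this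
  have h21 : h 2 1 = h 1 2 := by have := congrFun (congrFun hsym 1) 2; simpa using this
  have x10 : x 1 0 = x 0 1 := by have := congrFun (congrFun hx 0) 1; simpa using this
  have x20 : x 2 0 = x 0 2 := by have := congrFun (congrFun hx 0) 2; simpa using this
  have x21 : x 2 1 = x 1 2 := by have := congrFun (congrFun hx 1) 2; simpa using this
  have htr' : h 0 0 + h 1 1 + h 2 2 = 0 := by
    simpa [Matrix.trace, Fin.sum_univ_three] using htr
  have key := wcs18 (h 0 0) (h 1 1) (h 2 2) (h 0 1) (h 0 2) (h 1 2)
    (3 * x 0 0 - x.trace) (3 * x 1 1 - x.trace) (3 * x 2 2 - x.trace)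
    (3 * x 0 1) (3 * x 0 2) (3 * x 1 2)
  simp only [Matrix.trace, Matrix.diag, Matrix.mul_apply, Fin.sum_univ_three,
    h10, h20, h21, x10, x20, x21] at key ⊢
  have h22 : h 2 2 = -(h 0 0 + h 1 1) := by linarith
  rw [h22] at key ⊢
  linarith [key]

/-- The linear coaxial law `A x = λ(tr x)e + 2μ x + tr(h x)e` on symmetric
`3×3` real matrices (`h` symmetric traceless) is monotone, i.e. `tr((A x) x) ≥ 0` for all
symmetric `x`, iff `μ ≥ 0`, `3λ + 2μ ≥ 0` and `tr(h²) ≤ (8/3)μ(3λ + 2μ)`. -/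
theorem stmt18 (l μ : ℝ) (h : Matrix (Fin 3) (Fin 3) ℝ)
    (hsym : hᵀ = h) (htr : h.trace = 0) :
    ((∀ x : Matrix (Fin 3) (Fin 3) ℝ, xᵀ = x →
        0 ≤ (((l * x.trace) • (1 : Matrix (Fin 3) (Fin 3) ℝ) + (2 * μ) • x
            + (h * x).trace • (1 : Matrix (Fin 3) (Fin 3) ℝ)) * x).trace)
      ↔ (0 ≤ μ ∧ 0 ≤ 3 * l + 2 * μ ∧ (h * h).trace ≤ (8/3 : ℝ) * μ * (3 * l + 2 * μ))) := by
  set Hh := (h * h).trace with hHhdef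
  have hHh0 : 0 ≤ Hh := (sq18 h hsym).1
  constructor
  · intro H
    -- μ ≥ 0
    have hμ : 0 ≤ μ := by
      have h1 := H !![1,0,0;0,-1,0;0,0,0] (by
        ext i j; fin_cases i <;> fin_cases j <;> simp [Matrix.vecHead, Matrix.vecTail])
      rw [val18] at h1
      have e1 : (!![1,0,0;0,-1,0;0,0,0] : Matrix (Fin 3) (Fin 3) ℝ).trace = 0 := by
        simp [Matrix.trace, Fin.sum_univ_three, Matrix.vecHead, Matrix.vecTail]
      have e2 : ((!![1,0,0;0,-1,0;0,0,0] : Matrix (Fin 3) (Fin 3) ℝ) *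
          !![1,0,0;0,-1,0;0,0,0]).trace = 2 := by
        simp [Matrix.trace, Matrix.mul_apply, Fin.sum_univ_three, Matrix.vecHead, Matrix.vecTail]
        norm_num
      rw [e1, e2] at h1
      linarith
    have hA : 0 ≤ 3 * l + 2 * μ := by
      have h1 := H 1 (by simp)
      rw [val18] at h1
      have e1 : (1 : Matrix (Fin 3) (Fin 3) ℝ).trace = 3 := by
        simp [Matrix.trace, Fin.sum_univ_three]
      have e2 : ((1 : Matrix (Fin 3) (Fin 3) ℝ) * 1).trace = 3 := by
        rw [one_mul]; simp [Matrix.trace, Fin.sum_univ_three]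
      rw [e1, e2] at h1
      simp [htr] at h1
      linarith
    refine ⟨hμ, hA, ?_⟩
    -- the family of inequalities obtained from x = c•h + t•1
    have P : ∀ c t : ℝ,
        0 ≤ 3*(3*l+2*μ)*t^2 + 3*Hh*c*t + 2*μ*Hh*c^2 := by
      intro c t
      have hxsym : (c • h + t • (1 : Matrix (Fin 3) (Fin 3) ℝ))ᵀ
          = c • h + t • 1 := by
        simp [Matrix.transpose_add, Matrix.transpose_smul, hsym]
      have h1 := H (c • h + t • 1) hxsym
      rw [val18] at h1
      have e1 : (c • h + t • (1 : Matrix (Fin 3) (Fin 3) ℝ)).trace = 3*t := by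
        simp [trace_add, trace_smul, htr, smul_eq_mul]
        ring
      have e2 : (h * (c • h + t • (1 : Matrix (Fin 3) (Fin 3) ℝ))).trace = c * Hh := by
        simp [Matrix.mul_add, trace_add, trace_smul, htr, smul_eq_mul, hHhdef]
      have e3 : ((c • h + t • (1 : Matrix (Fin 3) (Fin 3) ℝ)) *
          (c • h + t • (1 : Matrix (Fin 3) (Fin 3) ℝ))).trace = c^2*Hh + 3*t^2 := by
        simp [Matrix.mul_add, Matrix.add_mul, trace_add, trace_smul, htr,
          smul_eq_mul, hHhdef, Matrix.smul_mul, Matrix.mul_smul]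
        ring
      rw [e1, e2, e3] at h1
      nlinarith [h1]
    rcases eq_or_lt_of_le hA with hA0 | hApos
    · -- 3l+2μ = 0 : then Hh must vanish
      have h1 := P 1 (-(2*μ+1))
      rw [← hA0] at h1
      have hHh : Hh ≤ 0 := by nlinarith [h1]
      nlinarith [hHh, hHh0]
    · -- 3l+2μ > 0
      have hAne : (3*l+2*μ) ≠ 0 := ne_of_gt hApos
      set τ : ℝ := -(Hh / (2*(3*l+2*μ))) with hτdef
      have hτ : 2*(3*l+2*μ)*τ = -Hh := by
        rw [hτdef]; field_simp
      have key := P 1 τ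
      -- from key : 0 ≤ 3Aτ² + 3Hhτ + 2μHh and 2Aτ = -Hh
      have h3 : 3*Hh^2 ≤ 8*μ*(3*l+2*μ)*Hh := by
        nlinarith [key, hτ, hApos]
      rcases eq_or_lt_of_le hHh0 with h0 | hpos
      · rw [← h0]
        positivity
      · nlinarith [h3, hpos]
  · rintro ⟨hμ, hA, hH⟩ x hx
    rw [val18]
    have hq := (sq18 x hx).2
    have hcs := cs18 h x hsym htr hx
    rw [← hHhdef] at hcs
    nlinarith [sq_nonneg ((3*l+2*μ)*x.trace^2 - 2*μ*(3*(x*x).trace - x.trace^2)),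
      mul_nonneg hA (sq_nonneg x.trace),
      mul_nonneg hμ (by linarith : (0:ℝ) ≤ 3*(x*x).trace - x.trace^2),
      mul_le_mul_of_nonneg_right hH (by linarith : (0:ℝ) ≤ 3*(x*x).trace - x.trace^2),
      mul_le_mul_of_nonneg_right hcs (sq_nonneg x.trace)]
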